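/- Let S be a nonempty finite set, P : S → ℝ, and for β ≥ 0 define μ^β(x) = exp(βP(x)) / Σ_{y∈S} exp(βP(y)). Then for every x ∈ S the limit of μ^β(x) as β → ∞ exists and equals 1/|argmax P| if x maximizes P and equals 0 otherwise; in particular, lim_{β→∞} μ^β(x) > 0 if and only if x is a maximizer of P. Hence the set of stochastically stable states equals the set of maximizers of P. -/

import Mathlib

open scoped Classical

/-- Let `S` be a nonempty finite set, `P : S → ℝ`, and for `β ≥ 0` let
`μ^β(x) = exp(βP(x)) / Σ_y exp(βP(y))`.  Then for every `x ∈ S` the limit of `μ^β(x)` as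
`β → ∞` exists and equals `1 / |argmax P|` if `x` maximizes `P`, and `0` otherwise; in
particular `lim_{β→∞} μ^β(x) > 0` iff `x` is a maximizer of `P`.  Hence the set of
stochastically stable states (those `x` with `lim_{β→∞} μ^β(x) > 0`) equals the set of
maximizers of `P`. -/
theorem gibbs_limit_uniform_on_argmax
    {S : Type*} [Fintype S] [Nonempty S] (P : S → ℝ) :
    (∀ x : S,
      Filter.Tendsto (fun β : ℝ => Real.exp (β * P x) / ∑ y, Real.exp (β * P y))
        Filter.atTop
        (nhds (if ∀ y, P y ≤ P x then
            (1 : ℝ) / (Finset.univ.filter fun z : S => ∀ y, P y ≤ P z).card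
          else 0))) ∧
    (∀ x : S,
      ((∀ y, P y ≤ P x) ↔
        0 < (if ∀ y, P y ≤ P x then
            (1 : ℝ) / (Finset.univ.filter fun z : S => ∀ y, P y ≤ P z).card
          else 0))) ∧
    ({x : S | ∃ L : ℝ, 0 < L ∧
        Filter.Tendsto (fun β : ℝ => Real.exp (β * P x) / ∑ y, Real.exp (β * P y))
          Filter.atTop (nhds L)} =
      {x : S | ∀ y, P y ≤ P x}) := by
  classical
  obtain ⟨x₀, hx₀⟩ := Finite.exists_max P
  set M := P x₀ with hM
  set A := (Finset.univ.filter fun z : S => ∀ y, P y ≤ P z) with hA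
  have hA0 : x₀ ∈ A := by simp [hA, fun y => hx₀ y]; exact hx₀
  have hcard : 0 < A.card := Finset.card_pos.2 ⟨x₀, hA0⟩
  have hKpos : (0:ℝ) < (A.card : ℝ) := by exact_mod_cast hcard
  have hmaxiff : ∀ x : S, (∀ y, P y ≤ P x) ↔ P x = M := by
    intro x
    constructor
    · intro h; exact le_antisymm (hx₀ x) (h x₀)
    · intro h y; rw [h]; exact hx₀ y
  -- limit of each shifted term
  have hterm : ∀ x : S,
      Filter.Tendsto (fun β : ℝ => Real.exp (β * (P x - M))) Filter.atTop
        (nhds (if P x = M then (1:ℝ) else 0)) := by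
    intro x
    by_cases h : P x = M
    · simp [h]
    · have hlt : P x - M < 0 := sub_neg.2 (lt_of_le_of_ne (hx₀ x) h)
      rw [if_neg h]
      have h1 : Filter.Tendsto (fun β : ℝ => β * (P x - M)) Filter.atTop Filter.atBot :=
        Filter.Tendsto.atTop_mul_const_of_neg hlt Filter.tendsto_id
      exact Real.tendsto_exp_atBot.comp h1
  -- limit of the shifted denominator
  have hsumval : (∑ y : S, (if P y = M then (1:ℝ) else 0)) = (A.card : ℝ) := by
    have h1 : (∑ y : S, (if P y = M then (1:ℝ) else 0))
        = ((Finset.univ.filter fun y : S => P y = M).card : ℝ) := by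
      simp [Finset.sum_boole]
    rw [h1, hA]
    congr 2
    apply Finset.filter_congr
    intro z _
    simp [hmaxiff z]
  have hsum : Filter.Tendsto (fun β : ℝ => ∑ y : S, Real.exp (β * (P y - M)))
      Filter.atTop (nhds ((A.card : ℝ))) := by
    rw [← hsumval]
    exact tendsto_finset_sum _ (fun y _ => hterm y)
  -- rewrite the ratio
  have hrw : ∀ x : S, (fun β : ℝ => Real.exp (β * P x) / ∑ y, Real.exp (β * P y))
      = fun β : ℝ => Real.exp (β * (P x - M)) / ∑ y : S, Real.exp (β * (P y - M)) := by
    intro x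
    funext β
    have hx : Real.exp (β * P x) = Real.exp (β * M) * Real.exp (β * (P x - M)) := by
      rw [← Real.exp_add]; ring_nf
    have hy : (∑ y : S, Real.exp (β * P y))
        = Real.exp (β * M) * ∑ y : S, Real.exp (β * (P y - M)) := by
      rw [Finset.mul_sum]
      refine Finset.sum_congr rfl fun y _ => ?_
      rw [← Real.exp_add]; ring_nf
    rw [hx, hy, mul_div_mul_left _ _ (Real.exp_ne_zero _)]
  -- main tendsto statement
  have hmain : ∀ x : S,
      Filter.Tendsto (fun β : ℝ => Real.exp (β * P x) / ∑ y, Real.exp (β * P y))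
        Filter.atTop
        (nhds (if ∀ y, P y ≤ P x then (1:ℝ) / (A.card : ℝ) else 0)) := by
    intro x
    rw [hrw x]
    have := (hterm x).div hsum (ne_of_gt hKpos)
    convert this using 2
    · rfl
    by_cases h : P x = M
    · rw [if_pos ((hmaxiff x).2 h), if_pos h]
    · rw [if_neg (fun hc => h ((hmaxiff x).1 hc)), if_neg h, zero_div]
  have hiff : ∀ x : S, (∀ y, P y ≤ P x) ↔
      0 < (if ∀ y, P y ≤ P x then (1:ℝ) / (A.card : ℝ) else 0) := by
    intro x
    constructor
    · intro h; rw [if_pos h]; positivity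
    · intro h
      by_contra hc
      rw [if_neg hc] at h
      exact lt_irrefl _ h
  refine ⟨hmain, hiff, ?_⟩
  ext x
  simp only [Set.mem_setOf_eq]
  constructor
  · rintro ⟨L, hL, hT⟩
    by_contra hc
    have h0 : L = 0 := tendsto_nhds_unique hT (by simpa [if_neg hc] using hmain x)
    exact lt_irrefl _ (h0 ▸ hL)
  · intro h
    exact ⟨(1:ℝ) / (A.card : ℝ), div_pos one_pos hKpos, by have := hmain x; rw [if_pos h] at this; exact this⟩
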